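/- Let R be a prime ring which is a maximal subring of a ring S. Then exactly one of the following holds. (P) S is prime and every nonzero two-sided ideal of S intersects R nontrivially. Otherwise, there exists a nonzero two-sided ideal I of S with R ∩ I = {0} (and hence R + I = S), and for any such ideal I exactly one of the following holds, independently of the choice of I: (PI) I·I ≠ 0, ann_R(I) = {0}, and the only R-homomorphism I → R is zero — in this case S is prime; (SR) I·I ≠ 0, ann_R(I) ≠ {0}, and the only R-homomorphism I → R/ann_R(I) is zero — in this case S is semiprime but not prime; (SI) there is a nonzero R-homomorphism I → R/ann_R(I) — in this case S is semiprime but not prime; (N) I·I = 0 — in this case S is not semiprime. -/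

import Mathlib

section

variable {S : Type*} [Ring S]

/-- `R` is a maximal subring of `S`. -/
def IsMaximalSubring (R : Subring S) : Prop :=
  R ≠ ⊤ ∧ ∀ T : Subring S, R ≤ T → T = R ∨ T = ⊤

/-- A ring `A` is prime if `aAb = 0` implies `a = 0` or `b = 0`. -/
def IsPrimeRing (A : Type*) [Ring A] : Prop :=
  ∀ a b : A, (∀ x : A, a * x * b = 0) → a = 0 ∨ b = 0

/-- A ring `A` is semiprime if `aAa = 0` implies `a = 0`. -/
def IsSemiprimeRing (A : Type*) [Ring A] : Prop :=
  ∀ a : A, (∀ x : A, a * x * a = 0) → a = 0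

/-- `I` is a nonzero two-sided ideal of `S` intersecting `R` trivially. -/
def TrivInt (R : Subring S) (I : TwoSidedIdeal S) : Prop :=
  I ≠ ⊥ ∧ ∀ x : S, x ∈ R → x ∈ I → x = 0

/-- An `R`-homomorphism `φ : I → R`, encoded by a function `f : S → S` whose values on
`I` lie in `R` and which is additive, `R`-bilinear and multiplicative on `I`. -/
def IsRHomToR (R : Subring S) (I : TwoSidedIdeal S) (f : S → S) : Prop :=
  (∀ i ∈ I, f i ∈ R) ∧
  (∀ i ∈ I, ∀ j ∈ I, f (i + j) = f i + f j) ∧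
  (∀ r ∈ R, ∀ i ∈ I, f (r * i) = r * f i) ∧
  (∀ r ∈ R, ∀ i ∈ I, f (i * r) = f i * r) ∧
  (∀ i ∈ I, ∀ j ∈ I, f (i * j) = f i * f j)

/-- There is a nonzero `R`-homomorphism `I → R/Z` (for a two-sided ideal `Z` of `R`,
intended to be `ann_R(I)`), where `R/Z` carries the `R`-actions through the quotient
map. -/
def HasNonzeroRHomToQuot (R : Subring S) (I : TwoSidedIdeal S)
    (Z : TwoSidedIdeal R) : Prop :=
  ∃ f : S → Z.ringCon.Quotient,
    (∀ i ∈ I, ∀ j ∈ I, f (i + j) = f i + f j) ∧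
    (∀ r : R, ∀ i ∈ I, f ((r : S) * i) = (r : Z.ringCon.Quotient) * f i) ∧
    (∀ r : R, ∀ i ∈ I, f (i * (r : S)) = f i * (r : Z.ringCon.Quotient)) ∧
    (∀ i ∈ I, ∀ j ∈ I, f (i * j) = f i * f j) ∧
    (∃ i ∈ I, f i ≠ 0)

/-- Case (P): `S` is prime and every nonzero two-sided ideal of `S` meets `R`
nontrivially. -/
def CaseP (R : Subring S) : Prop :=
  IsPrimeRing S ∧ ∀ J : TwoSidedIdeal S, J ≠ ⊥ → ∃ x ∈ J, x ∈ R ∧ x ≠ 0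

/-- Case (PI): `I·I ≠ 0`, `ann_R(I) = 0`, and the only `R`-homomorphism `I → R` is
zero. -/
def CasePI (R : Subring S) (I : TwoSidedIdeal S) : Prop :=
  (∃ x ∈ I, ∃ y ∈ I, x * y ≠ 0) ∧
  (∀ x ∈ R, (∀ i ∈ I, x * i = 0 ∧ i * x = 0) → x = 0) ∧
  (∀ f : S → S, IsRHomToR R I f → ∀ i ∈ I, f i = 0)

/-- Case (SR): `I·I ≠ 0`, `ann_R(I) ≠ 0`, and the only `R`-homomorphism
`I → R/ann_R(I)` is zero. -/
def CaseSR (R : Subring S) (I : TwoSidedIdeal S) (Z : TwoSidedIdeal R) : Prop :=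
  (∃ x ∈ I, ∃ y ∈ I, x * y ≠ 0) ∧
  (∃ x ∈ R, x ≠ 0 ∧ ∀ i ∈ I, x * i = 0 ∧ i * x = 0) ∧
  ¬ HasNonzeroRHomToQuot R I Z

/-- Case (SI): there is a nonzero `R`-homomorphism `I → R/ann_R(I)`. -/
def CaseSI (R : Subring S) (I : TwoSidedIdeal S) (Z : TwoSidedIdeal R) : Prop :=
  HasNonzeroRHomToQuot R I Z

/-- Case (N): `I·I = 0`. -/
def CaseN (I : TwoSidedIdeal S) : Prop :=
  ∀ x ∈ I, ∀ y ∈ I, x * y = 0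

namespace Stmt18Aux

variable {S : Type*} [Ring S]

lemma exists_ne_zero {I : TwoSidedIdeal S} (h : I ≠ ⊥) : ∃ x ∈ I, x ≠ 0 := by
  by_contra hc
  push_neg at hc
  exact h (eq_bot_iff.2 fun x hx => (TwoSidedIdeal.mem_bot S).2 (hc x hx))

lemma coe_quot_eq_zero_iff {R : Type*} [Ring R] (Z : TwoSidedIdeal R) (x : R) :
    (↑x : Z.ringCon.Quotient) = 0 ↔ x ∈ Z := by
  rw [show (0 : Z.ringCon.Quotient) = ((0:R) : Z.ringCon.Quotient) from rfl, RingCon.eq,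
    TwoSidedIdeal.rel_iff, sub_zero]

lemma decomp {R : Subring S} (hmax : IsMaximalSubring R) {J : TwoSidedIdeal S}
    (hJ : TrivInt R J) (s : S) : ∃ r ∈ R, ∃ j ∈ J, s = r + j := by
  set T : Subring S :=
    { carrier := {s : S | ∃ r ∈ R, ∃ j ∈ J, s = r + j}
      zero_mem' := ⟨0, R.zero_mem, 0, J.zero_mem, by simp⟩
      one_mem' := ⟨1, R.one_mem, 0, J.zero_mem, by simp⟩
      add_mem' := by
        rintro a b ⟨r, hr, j, hj, rfl⟩ ⟨r', hr', j', hj', rfl⟩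
        exact ⟨r + r', R.add_mem hr hr', j + j', J.add_mem hj hj', by abel⟩
      neg_mem' := by
        rintro a ⟨r, hr, j, hj, rfl⟩
        exact ⟨-r, R.neg_mem hr, -j, J.neg_mem hj, by abel⟩
      mul_mem' := by
        rintro a b ⟨r, hr, j, hj, rfl⟩ ⟨r', hr', j', hj', rfl⟩
        refine ⟨r * r', R.mul_mem hr hr', r * j' + j * r' + j * j', ?_, by noncomm_ring⟩
        exact J.add_mem (J.add_mem (J.mul_mem_left _ _ hj') (J.mul_mem_right _ _ hj))
          (J.mul_mem_right _ _ hj) } with hT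
  have hRT : R ≤ T := fun r hr => ⟨r, hr, 0, J.zero_mem, by simp⟩
  rcases hmax.2 T hRT with h | h
  · obtain ⟨j, hjJ, hjne⟩ := exists_ne_zero hJ.1
    have hjT : j ∈ T := ⟨0, R.zero_mem, j, hjJ, by simp⟩
    rw [h] at hjT
    exact absurd (hJ.2 j hjT hjJ) hjne
  · have : s ∈ T := h.symm ▸ Subring.mem_top s
    exact this

lemma uniq {R : Subring S} {J : TwoSidedIdeal S} (hJ : TrivInt R J) {r r' j j' : S}
    (hr : r ∈ R) (hr' : r' ∈ R) (hj : j ∈ J) (hj' : j' ∈ J) (h : r + j = r' + j') :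
    r = r' := by
  have h2 : r - r' = j' - j := by
    rw [sub_eq_sub_iff_add_eq_add, h, add_comm]
  have h3 : r - r' ∈ J := h2 ▸ J.sub_mem hj' hj
  have h4 : r - r' = 0 := hJ.2 _ (R.sub_mem hr hr') h3
  exact sub_eq_zero.1 h4

lemma exists_retract {R : Subring S} (hmax : IsMaximalSubring R) {J : TwoSidedIdeal S}
    (hJ : TrivInt R J) :
    ∃ ρ : S → R, (∀ s, s - ρ s ∈ J) ∧ (∀ s t, ρ (s + t) = ρ s + ρ t) ∧
      (∀ s t, ρ (s * t) = ρ s * ρ t) ∧ (∀ r : R, ρ (r : S) = r) := by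
  choose r hrR j hjJ hs using decomp hmax hJ
  set ρ : S → R := fun s => ⟨r s, hrR s⟩ with hρ
  have hmem : ∀ s, s - (ρ s : S) ∈ J := by
    intro s
    have : s - r s = j s := sub_eq_of_eq_add' (hs s)
    exact this ▸ hjJ s
  have key : ∀ (s : S) (x : R), s - (x : S) ∈ J → ρ s = x := by
    intro s x hx
    have h1 : (ρ s : S) + (s - ρ s) = (x : S) + (s - x) := by abel
    exact Subtype.ext (uniq hJ (ρ s).2 x.2 (hmem s) hx h1)
  refine ⟨ρ, hmem, ?_, ?_, ?_⟩
  · intro s t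
    apply key
    have : s + t - ((ρ s + ρ t : R) : S) = (s - ρ s) + (t - ρ t) := by push_cast; abel
    exact this ▸ J.add_mem (hmem s) (hmem t)
  · intro s t
    apply key
    have : s * t - ((ρ s * ρ t : R) : S) =
        (ρ s : S) * (t - ρ t) + (s - ρ s) * (ρ t : S) + (s - ρ s) * (t - ρ t) := by
      push_cast; noncomm_ring
    exact this ▸ J.add_mem (J.add_mem (J.mul_mem_left _ _ (hmem t))
      (J.mul_mem_right _ _ (hmem s))) (J.mul_mem_right _ _ (hmem s))
  · intro x
    apply key
    simp only [sub_self]; exact J.zero_mem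

end Stmt18Aux
namespace Stmt18Aux

variable {S : Type*} [Ring S]

/-- minimality: a nonzero subideal of a TrivInt ideal is the whole ideal -/
lemma minimal {R : Subring S} (hmax : IsMaximalSubring R) {I : TwoSidedIdeal S}
    (hI : TrivInt R I) {K : TwoSidedIdeal S} (hK : K ≤ I) (hKne : K ≠ ⊥) :
    ∀ i ∈ I, i ∈ K := by
  have hKtriv : TrivInt R K := ⟨hKne, fun x hxR hxK => hI.2 x hxR (hK hxK)⟩
  obtain ⟨ρ, hρ, -, -, -⟩ := exists_retract hmax hKtriv
  intro i hi
  have h1 : i - (ρ i : S) ∈ K := hρ i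
  have h2 : (ρ i : S) ∈ I := by
    have : i - (i - (ρ i : S)) = (ρ i : S) := sub_sub_cancel _ _
    exact this ▸ I.sub_mem hi (hK h1)
  have h3 : (ρ i : S) = 0 := hI.2 _ (ρ i).2 h2
  have : i - (0 : S) ∈ K := h3 ▸ h1
  simpa using this

/-- the two-sided ideal generated by an element -/
def genIdeal (a : S) : TwoSidedIdeal S :=
  TwoSidedIdeal.mk' (AddSubgroup.closure {z : S | ∃ x y : S, z = x * a * y} : Set S)
    (AddSubgroup.zero_mem _) (fun h h' => AddSubgroup.add_mem _ h h')
    (fun h => AddSubgroup.neg_mem _ h)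
    (by
      intro x y hy
      induction hy using AddSubgroup.closure_induction with
      | mem z hz =>
        obtain ⟨u, v, rfl⟩ := hz
        exact AddSubgroup.subset_closure ⟨x * u, v, by noncomm_ring⟩
      | zero => simpa using AddSubgroup.zero_mem _
      | add u v hu hv ihu ihv => simpa [mul_add] using AddSubgroup.add_mem _ ihu ihv
      | neg u hu ihu => simpa [mul_neg] using AddSubgroup.neg_mem _ ihu)
    (by
      intro x y hx
      induction hx using AddSubgroup.closure_induction with
      | mem z hz =>
        obtain ⟨u, v, rfl⟩ := hz
        exact AddSubgroup.subset_closure ⟨u, v * y, by noncomm_ring⟩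
      | zero => simpa using AddSubgroup.zero_mem _
      | add u v hu hv ihu ihv => simpa [add_mul] using AddSubgroup.add_mem _ ihu ihv
      | neg u hu ihu => simpa [neg_mul] using AddSubgroup.neg_mem _ ihu)

lemma mem_genIdeal_iff {a x : S} :
    x ∈ genIdeal a ↔ x ∈ AddSubgroup.closure {z : S | ∃ x y : S, z = x * a * y} :=
  TwoSidedIdeal.mem_mk' _ _ _ _ _ _ x

lemma self_mem_genIdeal (a : S) : a ∈ genIdeal a :=
  mem_genIdeal_iff.2 (AddSubgroup.subset_closure ⟨1, 1, by simp⟩)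

lemma genIdeal_ne_bot {a : S} (ha : a ≠ 0) : genIdeal a ≠ ⊥ := fun h =>
  ha ((TwoSidedIdeal.mem_bot S).1 (h ▸ self_mem_genIdeal a))

lemma gen_mul_zero {a b : S} (h : ∀ x : S, a * x * b = 0) :
    ∀ u ∈ genIdeal a, ∀ v ∈ genIdeal b, u * v = 0 := by
  have first : ∀ v ∈ AddSubgroup.closure {z : S | ∃ x y : S, z = x * b * y},
      ∀ u ∈ {z : S | ∃ x y : S, z = x * a * y}, u * v = 0 := by
    intro v hv
    induction hv using AddSubgroup.closure_induction with
    | mem z hz =>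
      rintro u ⟨x, y, rfl⟩
      obtain ⟨x', y', rfl⟩ := hz
      have h0 : a * (y * x') * b = 0 := h (y * x')
      calc x * a * y * (x' * b * y') = x * (a * (y * x') * b) * y' := by noncomm_ring
        _ = 0 := by rw [h0]; simp
    | zero => intro u hu; simp
    | add p q hp hq ihp ihq =>
      intro u hu
      rw [mul_add, ihp u hu, ihq u hu, add_zero]
    | neg p hp ihp =>
      intro u hu
      rw [mul_neg, ihp u hu, neg_zero]
  intro u hu v hv
  rw [mem_genIdeal_iff] at hu hv
  induction hu using AddSubgroup.closure_induction with
  | mem z hz => exact first v hv z hz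
  | zero => simp
  | add p q hp hq ihp ihq => rw [add_mul, ihp, ihq, add_zero]
  | neg p hp ihp => rw [neg_mul, ihp, neg_zero]

/-- Lemma C: an ideal with square zero meeting a TrivInt ideal trivially is zero. -/
lemma sq_disj_eq_zero {R : Subring S} (hmax : IsMaximalSubring R)
    (hRprime : ∀ a ∈ R, ∀ b ∈ R, (∀ x ∈ R, a * x * b = 0) → a = 0 ∨ b = 0)
    {I : TwoSidedIdeal S} (hI : TrivInt R I) {J : TwoSidedIdeal S}
    (hsq : ∀ u ∈ J, ∀ v ∈ J, u * v = 0) (hdisj : ∀ x, x ∈ J → x ∈ I → x = 0) :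
    ∀ b ∈ J, b = 0 := by
  obtain ⟨ρ, hρJ, hρadd, hρmul, hρR⟩ := exists_retract hmax hI
  intro b hb
  have hρ0 : ρ (0 : S) = 0 := by
    have := hρR 0
    simpa using this
  have key : ∀ x ∈ R, (ρ b : S) * x * (ρ b : S) = 0 := by
    intro x hx
    have h1 : b * (x * b) = 0 := hsq b hb (x * b) (J.mul_mem_left _ _ hb)
    have h2 : ρ (b * (x * b)) = ρ b * (ρ x * ρ b) := by rw [hρmul, hρmul]
    rw [h1, hρ0] at h2
    have hx' : ρ x = ⟨x, hx⟩ := hρR ⟨x, hx⟩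
    rw [hx'] at h2
    have h3 : (ρ b : S) * x * (ρ b : S) = ((ρ b * (⟨x, hx⟩ * ρ b) : R) : S) := by
      push_cast; noncomm_ring
    rw [h3, ← h2]
    simp
  have hρb : (ρ b : S) = 0 := by
    rcases hRprime (ρ b : S) (ρ b).2 (ρ b : S) (ρ b).2 key with h | h <;> exact h
  have : b - (0:S) ∈ I := hρb ▸ hρJ b
  exact hdisj b hb (by simpa using this)

lemma not_semiprime_of_sq_zero {I : TwoSidedIdeal S} (hne : I ≠ ⊥)
    (hN : ∀ x ∈ I, ∀ y ∈ I, x * y = 0) : ¬ IsSemiprimeRing S := by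
  intro hsp
  obtain ⟨i, hiI, hine⟩ := exists_ne_zero hne
  refine hine (hsp i fun x => ?_)
  rw [mul_assoc]
  exact hN i hiI (x * i) (I.mul_mem_left _ _ hiI)

/-- If `I` is TrivInt with `I² ≠ 0`, then `S` is semiprime. -/
lemma semiprime_of_sq_ne_zero {R : Subring S} (hmax : IsMaximalSubring R)
    (hRprime : ∀ a ∈ R, ∀ b ∈ R, (∀ x ∈ R, a * x * b = 0) → a = 0 ∨ b = 0)
    {I : TwoSidedIdeal S} (hI : TrivInt R I)
    (hsq : ∃ x ∈ I, ∃ y ∈ I, x * y ≠ 0) : IsSemiprimeRing S := by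
  intro a ha
  by_contra hane
  have hJsq : ∀ u ∈ genIdeal a, ∀ v ∈ genIdeal a, u * v = 0 := gen_mul_zero ha
  -- genIdeal a is not disjoint from I
  have hnd : ¬ (∀ x, x ∈ genIdeal a → x ∈ I → x = 0) := by
    intro hdisj
    exact hane (sq_disj_eq_zero hmax hRprime hI hJsq hdisj a (self_mem_genIdeal a))
  push_neg at hnd
  obtain ⟨x, hxJ, hxI, hxne⟩ := hnd
  have hKne : (genIdeal a ⊓ I) ≠ ⊥ := by
    intro h
    exact hxne ((TwoSidedIdeal.mem_bot S).1 (h ▸ (TwoSidedIdeal.mem_inf S).2 ⟨hxJ, hxI⟩))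
  have hIK : ∀ i ∈ I, i ∈ genIdeal a ⊓ I :=
    minimal hmax hI inf_le_right hKne
  obtain ⟨u, huI, v, hvI, huv⟩ := hsq
  exact huv (hJsq u ((TwoSidedIdeal.mem_inf S).1 (hIK u huI)).1 v
    ((TwoSidedIdeal.mem_inf S).1 (hIK v hvI)).1)

end Stmt18Aux
namespace Stmt18Aux

variable {S : Type*} [Ring S]

/-- If `I, J` are disjoint TrivInt ideals and `I² ≠ 0`, there is a nonzero hom `I → R/Z`. -/
lemma hom_of_other {R : Subring S} (hmax : IsMaximalSubring R)
    {I J : TwoSidedIdeal S} (hI : TrivInt R I) (hJ : TrivInt R J)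
    (hdisj : ∀ x, x ∈ I → x ∈ J → x = 0)
    (hsq : ∃ x ∈ I, ∃ y ∈ I, x * y ≠ 0)
    {Z : TwoSidedIdeal R}
    (hZ : ∀ x : R, x ∈ Z ↔ ∀ i ∈ I, (x : S) * i = 0 ∧ i * (x : S) = 0) :
    HasNonzeroRHomToQuot R I Z := by
  obtain ⟨ρ, hρJ, hρadd, hρmul, hρR⟩ := exists_retract hmax hJ
  refine ⟨fun s => ((ρ s : ↥R) : Z.ringCon.Quotient), ?_, ?_, ?_, ?_, ?_⟩
  · intro i _ j _
    dsimp only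
    rw [hρadd, RingCon.coe_add]
  · intro r i _
    dsimp only
    rw [hρmul, hρR, RingCon.coe_mul]
  · intro r i _
    dsimp only
    rw [hρmul, hρR, RingCon.coe_mul]
  · intro i _ j _
    dsimp only
    rw [hρmul, RingCon.coe_mul]
  · by_contra hc
    push_neg at hc
    obtain ⟨x, hxI, y, hyI, hxy⟩ := hsq
    apply hxy
    have hxZ : ρ x ∈ Z := (coe_quot_eq_zero_iff Z (ρ x)).1 (hc x hxI)
    have h1 : ((ρ x : ↥R) : S) * y = 0 := ((hZ (ρ x)).1 hxZ y hyI).1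
    have h2 : (x - (ρ x : S)) * y = 0 :=
      hdisj _ (I.mul_mem_left _ _ hyI) (J.mul_mem_right _ _ (hρJ x))
    have h3 : x * y = ((ρ x : ↥R) : S) * y + (x - (ρ x : S)) * y := by noncomm_ring
    rw [h3, h1, h2, add_zero]

end Stmt18Aux
namespace Stmt18Aux

variable {S : Type*} [Ring S]

/-- Consequences of case (SI): `I² ≠ 0` and `S` is not prime. -/
lemma SI_consequences {R : Subring S} (hmax : IsMaximalSubring R)
    {I : TwoSidedIdeal S} (hI : TrivInt R I)
    {Z : TwoSidedIdeal R}
    (hZ : ∀ x : R, x ∈ Z ↔ ∀ i ∈ I, (x : S) * i = 0 ∧ i * (x : S) = 0)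
    (hSI : HasNonzeroRHomToQuot R I Z) :
    (∃ x ∈ I, ∃ y ∈ I, x * y ≠ 0) ∧ ¬ IsPrimeRing S := by
  obtain ⟨f, fadd, fsl, fsr, fmul, i₀, hi₀I, hi₀⟩ := hSI
  have f0 : f 0 = 0 := by
    have h := fadd 0 I.zero_mem 0 I.zero_mem
    rw [add_zero] at h
    exact left_eq_add.mp h
  have fneg : ∀ i ∈ I, f (-i) = - f i := by
    intro i hi
    have h := fsl (-1 : ↥R) i hi
    rw [show (((-1 : ↥R) : S)) * i = -i by push_cast; exact neg_one_mul i] at h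
    rw [h, show ((-1 : ↥R) : Z.ringCon.Quotient) = -1 by rw [RingCon.coe_neg, RingCon.coe_one],
      neg_one_mul]
  have fsub : ∀ i ∈ I, ∀ j ∈ I, f (i - j) = f i - f j := by
    intro i hi j hj
    rw [sub_eq_add_neg, fadd i hi (-j) (I.neg_mem hj), fneg j hj, sub_eq_add_neg]
  -- the kernel ideal A
  set Acar : Set S := {a : S | ∃ i ∈ I, ∃ r : ↥R, a = i - (r : S) ∧ f i = (r : Z.ringCon.Quotient)}
    with hAcar
  have hzeroA : (0 : S) ∈ Acar := ⟨0, I.zero_mem, 0, by simp, by rw [f0, RingCon.coe_zero]⟩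
  have haddA : ∀ {x y : S}, x ∈ Acar → y ∈ Acar → x + y ∈ Acar := by
    rintro x y ⟨i, hi, r, rfl, hfi⟩ ⟨i', hi', r', rfl, hfi'⟩
    exact ⟨i + i', I.add_mem hi hi', r + r', by push_cast; abel,
      by rw [fadd i hi i' hi', hfi, hfi', RingCon.coe_add]⟩
  have hnegA : ∀ {x : S}, x ∈ Acar → -x ∈ Acar := by
    rintro x ⟨i, hi, r, rfl, hfi⟩
    exact ⟨-i, I.neg_mem hi, -r, by push_cast; abel,
      by rw [fneg i hi, hfi, RingCon.coe_neg]⟩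
  have hmulLA : ∀ {x y : S}, y ∈ Acar → x * y ∈ Acar := by
    rintro x y ⟨i, hi, r, rfl, hfi⟩
    obtain ⟨r₀, hr₀, j₀, hj₀, rfl⟩ := decomp hmax hI x
    refine ⟨r₀ * i + (j₀ * i - j₀ * (r : S)),
      I.add_mem (I.mul_mem_left _ _ hi) (I.sub_mem (I.mul_mem_left _ _ hi)
        (I.mul_mem_right _ _ hj₀)),
      ⟨r₀, hr₀⟩ * r, by push_cast; noncomm_ring, ?_⟩
    have m1 : r₀ * i ∈ I := I.mul_mem_left _ _ hi
    have m2 : j₀ * i - j₀ * (r : S) ∈ I :=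
      I.sub_mem (I.mul_mem_left _ _ hi) (I.mul_mem_right _ _ hj₀)
    rw [fadd _ m1 _ m2]
    have e1 : f (r₀ * i) = ((⟨r₀, hr₀⟩ * r : ↥R) : Z.ringCon.Quotient) := by
      have := fsl ⟨r₀, hr₀⟩ i hi
      rw [show ((⟨r₀, hr₀⟩ : ↥R) : S) = r₀ from rfl] at this
      rw [this, hfi, RingCon.coe_mul]
    have e2 : f (j₀ * i - j₀ * (r : S)) = 0 := by
      rw [fsub _ (I.mul_mem_left _ _ hi) _ (I.mul_mem_right _ _ hj₀),
        fmul j₀ hj₀ i hi, fsr r j₀ hj₀, hfi, sub_self]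
    rw [e1, e2, add_zero]
  have hmulRA : ∀ {x y : S}, x ∈ Acar → x * y ∈ Acar := by
    rintro x y ⟨i, hi, r, rfl, hfi⟩
    obtain ⟨r₀, hr₀, j₀, hj₀, rfl⟩ := decomp hmax hI y
    refine ⟨i * r₀ + (i * j₀ - (r : S) * j₀),
      I.add_mem (I.mul_mem_right _ _ hi) (I.sub_mem (I.mul_mem_right _ _ hi)
        (I.mul_mem_left _ _ hj₀)),
      r * ⟨r₀, hr₀⟩, by push_cast; noncomm_ring, ?_⟩
    have m1 : i * r₀ ∈ I := I.mul_mem_right _ _ hi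
    have m2 : i * j₀ - (r : S) * j₀ ∈ I :=
      I.sub_mem (I.mul_mem_right _ _ hi) (I.mul_mem_left _ _ hj₀)
    rw [fadd _ m1 _ m2]
    have e1 : f (i * r₀) = ((r * ⟨r₀, hr₀⟩ : ↥R) : Z.ringCon.Quotient) := by
      have := fsr ⟨r₀, hr₀⟩ i hi
      rw [show ((⟨r₀, hr₀⟩ : ↥R) : S) = r₀ from rfl] at this
      rw [this, hfi, RingCon.coe_mul]
    have e2 : f (i * j₀ - (r : S) * j₀) = 0 := by
      rw [fsub _ (I.mul_mem_right _ _ hi) _ (I.mul_mem_left _ _ hj₀),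
        fmul i hi j₀ hj₀, fsl r j₀ hj₀, hfi, sub_self]
    rw [e1, e2, add_zero]
  set A : TwoSidedIdeal S := TwoSidedIdeal.mk' Acar hzeroA haddA hnegA hmulLA hmulRA with hA
  have memA : ∀ {x : S}, x ∈ A ↔ x ∈ Acar := fun {x} =>
    TwoSidedIdeal.mem_mk' _ _ _ _ _ _ x
  -- a nonzero element of A
  obtain ⟨r₀, hr₀⟩ : ∃ r : ↥R, ((r : ↥R) : Z.ringCon.Quotient) = f i₀ := Quotient.exists_rep _
  set a₀ : S := i₀ - (r₀ : S) with ha₀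
  have ha₀A : a₀ ∈ A := memA.2 ⟨i₀, hi₀I, r₀, rfl, hr₀.symm⟩
  have ha₀ne : a₀ ≠ 0 := by
    intro h
    have : i₀ = (r₀ : S) := by rwa [sub_eq_zero] at h
    have h2 : i₀ = 0 := hI.2 i₀ (this ▸ r₀.2) hi₀I
    rw [h2, f0] at hi₀
    exact hi₀ rfl
  -- A meets I trivially
  have hdisjA : ∀ x, x ∈ A → x ∈ I → x = 0 := by
    by_contra hc
    push_neg at hc
    obtain ⟨x, hxA, hxI, hxne⟩ := hc
    have hKne : (A ⊓ I) ≠ ⊥ := fun h =>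
      hxne ((TwoSidedIdeal.mem_bot S).1 (h ▸ (TwoSidedIdeal.mem_inf S).2 ⟨hxA, hxI⟩))
    have hIA : ∀ i ∈ I, i ∈ A := fun i hi =>
      ((TwoSidedIdeal.mem_inf S).1 (minimal hmax hI inf_le_right hKne i hi)).1
    -- then f vanishes on I, contradiction
    apply hi₀
    obtain ⟨i', hi', r, he, hfi'⟩ := memA.1 (hIA i₀ hi₀I)
    have hrI : (r : S) ∈ I := by
      have : (r : S) = i' - i₀ := by rw [he]; abel
      exact this ▸ I.sub_mem hi' hi₀I
    have hr0 : (r : S) = 0 := hI.2 _ r.2 hrI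
    have : i₀ = i' := by rw [he, hr0, sub_zero]
    rw [this, hfi']
    rw [show r = 0 from Subtype.ext hr0, RingCon.coe_zero]
  constructor
  · -- I² ≠ 0
    by_contra hNN
    push_neg at hNN
    have hr₀Z : r₀ ∈ Z := by
      rw [hZ]
      intro k hk
      have hak : a₀ * k = 0 :=
        hdisjA _ (A.mul_mem_right _ _ ha₀A) (I.mul_mem_left _ _ hk)
      have hka : k * a₀ = 0 :=
        hdisjA _ (A.mul_mem_left _ _ ha₀A) (I.mul_mem_right _ _ hk)
      constructor
      · have : (r₀ : S) * k = i₀ * k - a₀ * k := by rw [ha₀]; noncomm_ring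
        rw [this, hNN i₀ hi₀I k hk, hak, sub_zero]
      · have : k * (r₀ : S) = k * i₀ - k * a₀ := by rw [ha₀]; noncomm_ring
        rw [this, hNN k hk i₀ hi₀I, hka, sub_zero]
    apply hi₀
    rw [← hr₀, coe_quot_eq_zero_iff]
    exact hr₀Z
  · -- not prime
    intro hP
    obtain ⟨i₁, hi₁I, hi₁ne⟩ := exists_ne_zero hI.1
    rcases hP a₀ i₁ (fun x => by
      rw [mul_assoc]
      exact hdisjA _ (A.mul_mem_right _ _ ha₀A) (I.mul_mem_left _ _ (I.mul_mem_left _ _ hi₁I)))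
      with h | h
    · exact ha₀ne h
    · exact hi₁ne h

end Stmt18Aux
namespace Stmt18Aux

variable {S : Type*} [Ring S]

/-- Under case (PI), every nonzero two-sided ideal of `S` contains `I`. -/
lemma ideal_le_of_PI {R : Subring S} (hmax : IsMaximalSubring R)
    {I : TwoSidedIdeal S} (hI : TrivInt R I) (hPI : CasePI R I)
    {J : TwoSidedIdeal S} (hJne : J ≠ ⊥) : ∀ i ∈ I, i ∈ J := by
  by_cases hd : ∀ x, x ∈ J → x ∈ I → x = 0
  · exfalso
    have hJtriv : TrivInt R J := by
      refine ⟨hJne, fun x hxR hxJ => ?_⟩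
      refine hPI.2.1 x hxR fun i hi => ⟨?_, ?_⟩
      · exact hd _ (J.mul_mem_right _ _ hxJ) (I.mul_mem_left _ _ hi)
      · exact hd _ (J.mul_mem_left _ _ hxJ) (I.mul_mem_right _ _ hi)
    obtain ⟨ρ, hρJ, hρadd, hρmul, hρR⟩ := exists_retract hmax hJtriv
    set g : S → S := fun s => ((ρ s : ↥R) : S) with hg
    have hgRHom : IsRHomToR R I g := by
      refine ⟨fun i _ => (ρ i).2, fun i _ j _ => ?_, fun r hr i _ => ?_, fun r hr i _ => ?_,
        fun i _ j _ => ?_⟩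
      · simp only [hg]
        rw [hρadd]; push_cast; ring
      · simp only [hg]
        rw [show r = ((⟨r, hr⟩ : ↥R) : S) from rfl, hρmul, hρR]
        push_cast; ring
      · simp only [hg]
        rw [show r = ((⟨r, hr⟩ : ↥R) : S) from rfl, hρmul, hρR]
        push_cast; ring
      · simp only [hg]
        rw [hρmul]; push_cast; ring
    have hzero := hPI.2.2 g hgRHom
    obtain ⟨i, hiI, hine⟩ := exists_ne_zero hI.1
    have h1 : i - g i ∈ J := hρJ i
    rw [hzero i hiI, sub_zero] at h1
    exact hine (hd i h1 hiI)
  · push_neg at hd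
    obtain ⟨x, hxJ, hxI, hxne⟩ := hd
    have hKne : (J ⊓ I) ≠ ⊥ := fun h =>
      hxne ((TwoSidedIdeal.mem_bot S).1 (h ▸ (TwoSidedIdeal.mem_inf S).2 ⟨hxJ, hxI⟩))
    exact fun i hi =>
      ((TwoSidedIdeal.mem_inf S).1 (minimal hmax hI inf_le_right hKne i hi)).1

/-- Under case (PI), `S` is prime. -/
lemma PI_prime {R : Subring S} (hmax : IsMaximalSubring R)
    {I : TwoSidedIdeal S} (hI : TrivInt R I) (hPI : CasePI R I) : IsPrimeRing S := by
  intro a b hab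
  by_contra hc
  push_neg at hc
  obtain ⟨x, hxI, y, hyI, hxy⟩ := hPI.1
  exact hxy (gen_mul_zero hab x
    (ideal_le_of_PI hmax hI hPI (genIdeal_ne_bot hc.1) x hxI) y
    (ideal_le_of_PI hmax hI hPI (genIdeal_ne_bot hc.2) y hyI))

/-- If every nonzero two-sided ideal of `S` meets `R` nontrivially, `S` is prime. -/
lemma prime_of_meets {R : Subring S}
    (hRprime : ∀ a ∈ R, ∀ b ∈ R, (∀ x ∈ R, a * x * b = 0) → a = 0 ∨ b = 0)
    (hmeets : ∀ J : TwoSidedIdeal S, J ≠ ⊥ → ∃ x ∈ J, x ∈ R ∧ x ≠ 0) :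
    IsPrimeRing S := by
  intro a b hab
  by_contra hc
  push_neg at hc
  obtain ⟨x, hxJ, hxR, hxne⟩ := hmeets (genIdeal a) (genIdeal_ne_bot hc.1)
  obtain ⟨y, hyJ, hyR, hyne⟩ := hmeets (genIdeal b) (genIdeal_ne_bot hc.2)
  have hxy : ∀ w ∈ R, x * w * y = 0 := fun w _ =>
    gen_mul_zero hab (x * w) ((genIdeal a).mul_mem_right _ _ hxJ) y hyJ
  rcases hRprime x hxR y hyR hxy with h | h
  · exact hxne h
  · exact hyne h

/-- From a nonzero `R`-homomorphism `I → R` and `Z` trivial, build a nonzero hom to `R/Z`. -/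
lemma hom_to_quot_of_RHom {R : Subring S} {I : TwoSidedIdeal S}
    {Z : TwoSidedIdeal R} (hZbot : ∀ x : R, x ∈ Z → x = 0)
    {f : S → S} (hf : IsRHomToR R I f) {i₀ : S} (hi₀I : i₀ ∈ I) (hi₀ : f i₀ ≠ 0) :
    HasNonzeroRHomToQuot R I Z := by
  obtain ⟨hmem, hadd, hsl, hsr, hmul⟩ := hf
  classical
  refine ⟨fun s => if h : s ∈ I then ((⟨f s, hmem s h⟩ : ↥R) : Z.ringCon.Quotient) else 0,
    ?_, ?_, ?_, ?_, ?_⟩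
  · intro i hi j hj
    beta_reduce
    rw [dif_pos (I.add_mem hi hj), dif_pos hi, dif_pos hj, ← RingCon.coe_add]
    exact congrArg _ (Subtype.ext (hadd i hi j hj))
  · intro r i hi
    beta_reduce
    rw [dif_pos (I.mul_mem_left _ _ hi), dif_pos hi, ← RingCon.coe_mul]
    exact congrArg _ (Subtype.ext (hsl (r : S) r.2 i hi))
  · intro r i hi
    beta_reduce
    rw [dif_pos (I.mul_mem_right _ _ hi), dif_pos hi, ← RingCon.coe_mul]
    exact congrArg _ (Subtype.ext (hsr (r : S) r.2 i hi))
  · intro i hi j hj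
    beta_reduce
    rw [dif_pos (I.mul_mem_left _ _ hj), dif_pos hi, dif_pos hj, ← RingCon.coe_mul]
    exact congrArg _ (Subtype.ext (hmul i hi j hj))
  · refine ⟨i₀, hi₀I, ?_⟩
    beta_reduce
    rw [dif_pos hi₀I]
    intro h
    have : (⟨f i₀, hmem i₀ hi₀I⟩ : ↥R) ∈ Z := (coe_quot_eq_zero_iff Z _).1 h
    exact hi₀ (congrArg Subtype.val (hZbot _ this))

end Stmt18Aux

open Stmt18Aux in
/-- Classification of the minimal extensions of a prime ring `R`:
either case (P) holds, or some nonzero two-sided ideal `I` meets `R` trivially (and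
then `R + I = S`); for any such `I`, with `Z = ann_R(I)`, exactly one of the cases
(PI), (SR), (SI), (N) holds — independently of the choice of `I` — and accordingly `S`
is prime / semiprime not prime / semiprime not prime / not semiprime. -/
theorem stmt18 (R : Subring S) (hmax : IsMaximalSubring R)
    (hRprime : ∀ a ∈ R, ∀ b ∈ R, (∀ x ∈ R, a * x * b = 0) → a = 0 ∨ b = 0) :
    -- exactly one of: case (P), or some nonzero ideal meets `R` trivially
    ((CaseP R ∨ ∃ I : TwoSidedIdeal S, TrivInt R I) ∧
      ¬ (CaseP R ∧ ∃ I : TwoSidedIdeal S, TrivInt R I)) ∧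
    -- for any such ideal, `R + I = S`
    (∀ I : TwoSidedIdeal S, TrivInt R I → ∀ s : S, ∃ r ∈ R, ∃ i ∈ I, s = r + i) ∧
    -- for any such ideal, exactly one of (PI), (SR), (SI), (N), with consequences
    (∀ I : TwoSidedIdeal S, TrivInt R I →
      ∀ Z : TwoSidedIdeal R,
        (∀ x : R, x ∈ Z ↔ ∀ i ∈ I, (x : S) * i = 0 ∧ i * (x : S) = 0) →
        ((CasePI R I ∨ CaseSR R I Z ∨ CaseSI R I Z ∨ CaseN I) ∧
         (¬ (CasePI R I ∧ CaseSR R I Z)) ∧ (¬ (CasePI R I ∧ CaseSI R I Z)) ∧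
         (¬ (CasePI R I ∧ CaseN I)) ∧ (¬ (CaseSR R I Z ∧ CaseSI R I Z)) ∧
         (¬ (CaseSR R I Z ∧ CaseN I)) ∧ (¬ (CaseSI R I Z ∧ CaseN I)) ∧
         (CasePI R I → IsPrimeRing S) ∧
         (CaseSR R I Z → IsSemiprimeRing S ∧ ¬ IsPrimeRing S) ∧
         (CaseSI R I Z → IsSemiprimeRing S ∧ ¬ IsPrimeRing S) ∧
         (CaseN I → ¬ IsSemiprimeRing S))) ∧
    -- the case does not depend on the choice of `I`
    (∀ I I' : TwoSidedIdeal S, TrivInt R I → TrivInt R I' →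
      ∀ Z Z' : TwoSidedIdeal R,
        (∀ x : R, x ∈ Z ↔ ∀ i ∈ I, (x : S) * i = 0 ∧ i * (x : S) = 0) →
        (∀ x : R, x ∈ Z' ↔ ∀ i ∈ I', (x : S) * i = 0 ∧ i * (x : S) = 0) →
        ((CasePI R I ↔ CasePI R I') ∧ (CaseSR R I Z ↔ CaseSR R I' Z') ∧
         (CaseSI R I Z ↔ CaseSI R I' Z') ∧ (CaseN I ↔ CaseN I'))) := by
  refine ⟨?_, ?_, ?_, ?_⟩
  · -- part 1
    constructor
    · by_cases hex : ∃ I : TwoSidedIdeal S, TrivInt R I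
      · exact Or.inr hex
      · left
        have hmeets : ∀ J : TwoSidedIdeal S, J ≠ ⊥ → ∃ x ∈ J, x ∈ R ∧ x ≠ 0 := by
          intro J hJ
          by_contra hc
          push_neg at hc
          exact hex ⟨J, hJ, fun x hxR hxJ => hc x hxJ hxR⟩
        exact ⟨prime_of_meets hRprime hmeets, hmeets⟩
    · rintro ⟨⟨-, hmeets⟩, I, hIne, hItriv⟩
      obtain ⟨x, hxI, hxR, hxne⟩ := hmeets I hIne
      exact hxne (hItriv x hxR hxI)
  · -- part 2
    exact fun I hI s => decomp hmax hI s
  · -- part 3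
    intro I hI Z hZ
    have hPIp : CasePI R I → IsPrimeRing S := fun h => PI_prime hmax hI h
    have hNc : CaseN I → ¬ IsSemiprimeRing S := fun h => not_semiprime_of_sq_zero hI.1 h
    have hSRc : CaseSR R I Z → IsSemiprimeRing S ∧ ¬ IsPrimeRing S := by
      intro h
      refine ⟨semiprime_of_sq_ne_zero hmax hRprime hI h.1, ?_⟩
      intro hP
      obtain ⟨x, hxR, hxne, hxann⟩ := h.2.1
      obtain ⟨i, hiI, hine⟩ := exists_ne_zero hI.1
      rcases hP x i (fun s => by
        rw [mul_assoc]; exact (hxann _ (I.mul_mem_left _ _ hiI)).1) with h' | h'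
      exacts [hxne h', hine h']
    have hSIc : CaseSI R I Z → IsSemiprimeRing S ∧ ¬ IsPrimeRing S := by
      intro h
      obtain ⟨hsq, hnp⟩ := SI_consequences hmax hI hZ h
      exact ⟨semiprime_of_sq_ne_zero hmax hRprime hI hsq, hnp⟩
    have main : CasePI R I ∨ CaseSR R I Z ∨ CaseSI R I Z ∨ CaseN I := by
      by_cases hN : ∀ x ∈ I, ∀ y ∈ I, x * y = 0
      · exact Or.inr (Or.inr (Or.inr hN))
      · push_neg at hN
        by_cases hSI : HasNonzeroRHomToQuot R I Z
        · exact Or.inr (Or.inr (Or.inl hSI))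
        · by_cases hann : ∃ x ∈ R, x ≠ 0 ∧ ∀ i ∈ I, x * i = 0 ∧ i * x = 0
          · exact Or.inr (Or.inl ⟨hN, hann, hSI⟩)
          · left
            refine ⟨hN, ?_, ?_⟩
            · intro x hxR hxann
              by_contra hxne
              exact hann ⟨x, hxR, hxne, hxann⟩
            · intro f hf i hiI
              by_contra hfi
              have hZbot : ∀ z : ↥R, z ∈ Z → z = 0 := by
                intro z hz
                by_contra hzne
                exact hann ⟨(z : S), z.2, fun h => hzne (Subtype.ext h), (hZ z).1 hz⟩
              exact hSI (hom_to_quot_of_RHom hZbot hf hiI hfi)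
    refine ⟨main, ?_, ?_, ?_, ?_, ?_, ?_, hPIp, hSRc, hSIc, hNc⟩
    · rintro ⟨hpi, hsr⟩
      obtain ⟨x, hxR, hxne, hxann⟩ := hsr.2.1
      exact hxne (hpi.2.1 x hxR hxann)
    · rintro ⟨hpi, hsi⟩
      exact (hSIc hsi).2 (hPIp hpi)
    · rintro ⟨hpi, hn⟩
      obtain ⟨x, hx, y, hy, hne⟩ := hpi.1
      exact hne (hn x hx y hy)
    · rintro ⟨hsr, hsi⟩
      exact hsr.2.2 hsi
    · rintro ⟨hsr, hn⟩
      obtain ⟨x, hx, y, hy, hne⟩ := hsr.1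
      exact hne (hn x hx y hy)
    · rintro ⟨hsi, hn⟩
      obtain ⟨x, hx, y, hy, hne⟩ := (SI_consequences hmax hI hZ hsi).1
      exact hne (hn x hx y hy)
  · -- part 4
    intro I I' hI hI' Z Z' hZ hZ'
    by_cases heq : I = I'
    · subst heq
      have hZZ : Z = Z' := SetLike.ext fun x => (hZ x).trans (hZ' x).symm
      subst hZZ
      exact ⟨Iff.rfl, Iff.rfl, Iff.rfl, Iff.rfl⟩
    · have hdisj : ∀ x, x ∈ I → x ∈ I' → x = 0 := by
        by_contra hc
        push_neg at hc
        obtain ⟨x, hxI, hxI', hxne⟩ := hc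
        have hKne : (I ⊓ I') ≠ ⊥ := fun h =>
          hxne ((TwoSidedIdeal.mem_bot S).1 (h ▸ (TwoSidedIdeal.mem_inf S).2 ⟨hxI, hxI'⟩))
        refine heq (le_antisymm ?_ ?_)
        · exact fun y hy =>
            ((TwoSidedIdeal.mem_inf S).1 (minimal hmax hI inf_le_left hKne y hy)).2
        · exact fun y hy =>
            ((TwoSidedIdeal.mem_inf S).1 (minimal hmax hI' inf_le_right hKne y hy)).1
      have hdisj' : ∀ x, x ∈ I' → x ∈ I → x = 0 := fun x h1 h2 => hdisj x h2 h1
      have hNN' : CaseN I → CaseN I' := by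
        intro hn
        by_contra hnot
        unfold CaseN at hnot
        push_neg at hnot
        exact not_semiprime_of_sq_zero hI.1 hn
          (semiprime_of_sq_ne_zero hmax hRprime hI' hnot)
      have hN'N : CaseN I' → CaseN I := by
        intro hn
        by_contra hnot
        unfold CaseN at hnot
        push_neg at hnot
        exact not_semiprime_of_sq_zero hI'.1 hn
          (semiprime_of_sq_ne_zero hmax hRprime hI hnot)
      have hPIfalse : ¬ CasePI R I := fun hpi =>
        (SI_consequences hmax hI hZ (hom_of_other hmax hI hI' hdisj hpi.1 hZ)).2
          (PI_prime hmax hI hpi)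
      have hPIfalse' : ¬ CasePI R I' := fun hpi =>
        (SI_consequences hmax hI' hZ' (hom_of_other hmax hI' hI hdisj' hpi.1 hZ')).2
          (PI_prime hmax hI' hpi)
      have hSRfalse : ¬ CaseSR R I Z := fun hsr =>
        hsr.2.2 (hom_of_other hmax hI hI' hdisj hsr.1 hZ)
      have hSRfalse' : ¬ CaseSR R I' Z' := fun hsr =>
        hsr.2.2 (hom_of_other hmax hI' hI hdisj' hsr.1 hZ')
      have hSItrans : CaseSI R I Z → CaseSI R I' Z' := by
        intro hsi
        have hsq := (SI_consequences hmax hI hZ hsi).1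
        have hsp := semiprime_of_sq_ne_zero hmax hRprime hI hsq
        have hsq' : ∃ x ∈ I', ∃ y ∈ I', x * y ≠ 0 := by
          by_contra hc
          push_neg at hc
          exact not_semiprime_of_sq_zero hI'.1 hc hsp
        exact hom_of_other hmax hI' hI hdisj' hsq' hZ'
      have hSItrans' : CaseSI R I' Z' → CaseSI R I Z := by
        intro hsi
        have hsq := (SI_consequences hmax hI' hZ' hsi).1
        have hsp := semiprime_of_sq_ne_zero hmax hRprime hI' hsq
        have hsq' : ∃ x ∈ I, ∃ y ∈ I, x * y ≠ 0 := by
          by_contra hc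
          push_neg at hc
          exact not_semiprime_of_sq_zero hI.1 hc hsp
        exact hom_of_other hmax hI hI' hdisj hsq' hZ
      exact ⟨iff_of_false hPIfalse hPIfalse', iff_of_false hSRfalse hSRfalse',
        ⟨hSItrans, hSItrans'⟩, ⟨hNN', hN'N⟩⟩

end
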